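/- There exists an absolute constant C > 0 such that for all real x ≥ 2 and all integers n with 2 ≤ n ≤ x, one has |∫₀^1 (2·x^u/(x^u + 1)²)·sinh(u·log(x/n)) du − (1/log x)·F(log(x/n)/log x)| ≤ C/(n·log n). -/

import Mathlib

open MeasureTheory Real Set

noncomputable def F (u : ℝ) : ℝ :=
  ∫ y in Set.Ioi (0 : ℝ), Real.sinh (2 * u * y) / Real.cosh y ^ 2

lemma g_cont (v : ℝ) : Continuous fun y : ℝ => Real.sinh (2 * v * y) / Real.cosh y ^ 2 :=
  (Real.continuous_sinh.comp (continuous_const.mul continuous_id)).div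
    (Real.continuous_cosh.pow 2) (fun y => by positivity)

lemma g_nonneg {v y : ℝ} (hv : 0 ≤ v) (hy : 0 ≤ y) :
    0 ≤ Real.sinh (2 * v * y) / Real.cosh y ^ 2 := by
  apply div_nonneg _ (by positivity)
  have ht : (0:ℝ) ≤ 2 * v * y := by positivity
  have := Real.exp_le_exp.mpr (neg_le_self ht)
  rw [Real.sinh_eq]; linarith

lemma g_bound {v y : ℝ} (hv : 0 ≤ v) (hy : 0 ≤ y) :
    Real.sinh (2 * v * y) / Real.cosh y ^ 2 ≤ 2 * Real.exp (-(2 * (1 - v)) * y) := by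
  have h1 : Real.sinh (2 * v * y) ≤ Real.exp (2 * v * y) / 2 := by
    rw [Real.sinh_eq]; have := Real.exp_pos (-(2 * v * y)); linarith
  have h2 : Real.exp (2 * y) / 4 ≤ Real.cosh y ^ 2 := by
    have hc : Real.exp y / 2 ≤ Real.cosh y := by
      rw [Real.cosh_eq]; have := Real.exp_pos (-y); linarith
    have := mul_le_mul hc hc (by positivity) (Real.cosh_pos y).le
    calc Real.exp (2 * y) / 4 = (Real.exp y / 2) * (Real.exp y / 2) := by
            rw [show (2:ℝ) * y = y + y by ring, Real.exp_add]; ring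
      _ ≤ Real.cosh y * Real.cosh y := this
      _ = Real.cosh y ^ 2 := (sq (Real.cosh y)).symm
  calc Real.sinh (2 * v * y) / Real.cosh y ^ 2
      ≤ (Real.exp (2 * v * y) / 2) / (Real.exp (2 * y) / 4) :=
        div_le_div₀ (by positivity) h1 (by positivity) h2
    _ = 2 * Real.exp (-(2 * (1 - v)) * y) := by
        rw [show -(2 * (1 - v)) * y = 2 * v * y - 2 * y by ring, Real.exp_sub]
        field_simp
        ring

lemma integral_exp_neg_mul_Ioi {b : ℝ} (hb : 0 < b) (a : ℝ) :
    ∫ y in Ioi a, Real.exp (-b * y) = Real.exp (-b * a) / b := by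
  have h := MeasureTheory.integral_comp_mul_left_Ioi (fun z => Real.exp (-z)) a hb
  simp only [smul_eq_mul] at h
  rw [show (fun y => Real.exp (-b * y)) = fun y => Real.exp (-(b * y)) by ext y; ring_nf]
  rw [h, integral_exp_neg_Ioi]
  rw [neg_mul]
  field_simp

lemma g_integrableOn {v : ℝ} (hv : 0 ≤ v) (hv1 : v < 1) {a : ℝ} (ha : 0 ≤ a) :
    IntegrableOn (fun y : ℝ => Real.sinh (2 * v * y) / Real.cosh y ^ 2) (Ioi a) := by
  have hb : (0:ℝ) < 2 * (1 - v) := by linarith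
  have hdom : IntegrableOn (fun y : ℝ => 2 * Real.exp (-(2 * (1 - v)) * y)) (Ioi a) :=
    (exp_neg_integrableOn_Ioi a hb).const_mul 2
  refine MeasureTheory.Integrable.mono hdom ((g_cont v).aestronglyMeasurable.restrict) ?_
  filter_upwards [ae_restrict_mem measurableSet_Ioi] with y hy
  have hy0 : 0 ≤ y := le_trans ha (le_of_lt hy)
  rw [Real.norm_eq_abs, Real.norm_eq_abs, abs_of_nonneg (g_nonneg hv hy0),
    abs_of_nonneg (by positivity)]
  exact g_bound hv hy0

theorem weight_integral_approx :
    ∃ C : ℝ, 0 < C ∧ ∀ x : ℝ, ∀ n : ℕ, 2 ≤ x → 2 ≤ n → (n : ℝ) ≤ x →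
      |(∫ u in (0 : ℝ)..1,
          (2 * x ^ u / (x ^ u + 1) ^ 2) * Real.sinh (u * Real.log (x / n)))
        - (1 / Real.log x) * F (Real.log (x / n) / Real.log x)| ≤
        C / (n * Real.log n) := by
  refine ⟨1, one_pos, ?_⟩
  intro x n hx hn hnx
  have hx0 : (0:ℝ) < x := by linarith
  have hn1 : (1:ℝ) < n := by exact_mod_cast Nat.lt_of_lt_of_le one_lt_two hn
  have hn0 : (0:ℝ) < n := by linarith
  set Lx := Real.log x with hLxdef
  set Ln := Real.log (n:ℝ) with hLndef
  have hLx : 0 < Lx := Real.log_pos (by linarith)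
  have hLn : 0 < Ln := Real.log_pos hn1
  have hLle : Ln ≤ Lx := Real.log_le_log hn0 hnx
  have hLdiv : Real.log (x / n) = Lx - Ln := Real.log_div hx0.ne' hn0.ne'
  set v := Real.log (x / n) / Lx with hvdef
  have hv0 : 0 ≤ v := div_nonneg (by rw [hLdiv]; linarith) hLx.le
  have hv1 : v < 1 := by rw [hvdef, div_lt_one hLx, hLdiv]; linarith
  set a := Lx / 2 with hadef
  have ha : 0 < a := by positivity
  set g := fun y : ℝ => Real.sinh (2 * v * y) / Real.cosh y ^ 2 with hgdef
  have hpt : ∀ u : ℝ, 2 * x ^ u / (x ^ u + 1) ^ 2 * Real.sinh (u * Real.log (x / n))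
      = (1/2) * g (u * a) := by
    intro u
    have hxu : x ^ u = Real.exp (u * Lx) := by
      rw [Real.rpow_def_of_pos hx0, mul_comm]
    have hua : u * a = u * Lx / 2 := by rw [hadef]; ring
    have harg : 2 * v * (u * a) = u * Real.log (x / n) := by
      rw [hvdef, hadef]; field_simp
    rw [hgdef]; simp only; rw [harg, hxu]
    set s := Real.exp (u * Lx / 2) with hsdef
    have hs0 : 0 < s := Real.exp_pos _
    have hE : Real.exp (u * Lx) = s * s := by
      rw [hsdef, ← Real.exp_add]; ring_nf
    have hcosh : Real.cosh (u * a) = (s + s⁻¹) / 2 := by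
      rw [Real.cosh_eq, hua, ← Real.exp_neg, hsdef]
    rw [hE, hcosh]
    have hs0' : s + s⁻¹ ≠ 0 := by positivity
    field_simp
  have hI1 : (∫ u in (0:ℝ)..1, 2 * x ^ u / (x ^ u + 1) ^ 2 * Real.sinh (u * Real.log (x/n)))
      = (1 / Lx) * ∫ y in (0:ℝ)..a, g y := by
    rw [intervalIntegral.integral_congr (g := fun u => (1/2) * g (u * a)) (fun u _ => hpt u),
      intervalIntegral.integral_const_mul, intervalIntegral.integral_comp_mul_right g ha.ne',
      zero_mul, one_mul, smul_eq_mul, ← mul_assoc]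
    have h2 : (1:ℝ)/2 * a⁻¹ = 1 / Lx := by rw [hadef]; field_simp
    rw [h2]
  have hint0 : IntegrableOn g (Ioi 0) := g_integrableOn hv0 hv1 le_rfl
  have hIoc : IntegrableOn g (Ioc 0 a) := hint0.mono_set Ioc_subset_Ioi_self
  have hIoi : IntegrableOn g (Ioi a) := g_integrableOn hv0 hv1 ha.le
  have hsplit : F v = (∫ y in (0:ℝ)..a, g y) + ∫ y in Ioi a, g y := by
    rw [F, intervalIntegral.integral_of_le ha.le,
      ← Ioc_union_Ioi_eq_Ioi ha.le,
      setIntegral_union (Ioc_disjoint_Ioi le_rfl) measurableSet_Ioi hIoc hIoi]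
  set T := ∫ y in Ioi a, g y with hTdef
  have hT0 : 0 ≤ T := setIntegral_nonneg measurableSet_Ioi
    (fun y hy => g_nonneg hv0 (ha.le.trans (le_of_lt hy)))
  have hb : (0:ℝ) < 2 * (1 - v) := by linarith
  have hTle : T ≤ 2 * (Real.exp (-(2*(1-v)) * a) / (2*(1-v))) := by
    calc T ≤ ∫ y in Ioi a, 2 * Real.exp (-(2*(1-v)) * y) := by
          refine setIntegral_mono_on hIoi ((exp_neg_integrableOn_Ioi a hb).const_mul 2)
            measurableSet_Ioi (fun y hy => ?_)
          exact g_bound hv0 (ha.le.trans (le_of_lt hy))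
      _ = 2 * (Real.exp (-(2*(1-v)) * a) / (2*(1-v))) := by
          rw [MeasureTheory.integral_const_mul, integral_exp_neg_mul_Ioi hb]
  have h1v : 1 - v = Ln / Lx := by
    rw [hvdef, hLdiv]; field_simp; ring
  have hexp : Real.exp (-(2*(1-v)) * a) = (n:ℝ)⁻¹ := by
    rw [show -(2*(1-v))*a = -((1-v)*Lx) by rw [hadef]; ring, h1v,
      div_mul_cancel₀ _ hLx.ne', hLndef, Real.exp_neg, Real.exp_log hn0]
  rw [hI1, hsplit]
  have heq : (1/Lx) * (∫ y in (0:ℝ)..a, g y)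
      - (1/Lx) * ((∫ y in (0:ℝ)..a, g y) + T) = -((1/Lx) * T) := by ring
  rw [heq, abs_neg, abs_of_nonneg (by positivity)]
  calc (1/Lx) * T ≤ (1/Lx) * (2 * ((n:ℝ)⁻¹ / (2*(1-v)))) := by
        rw [← hexp]; exact mul_le_mul_of_nonneg_left hTle (by positivity)
    _ = 1 / (n * Ln) := by
        rw [h1v]
        field_simp
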